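/- Let b ∈ ℕ^n be nonincreasing and r ∈ ℕ^m, and set V = {b + x : x ∈ ℕ^n, x ≺ r*}. If u and v are both minimal elements of V under majorization (i.e., no element of V strictly majorizes below them), then u ≺ w and v ≺ w for every w ∈ V, and u is a rearrangement of v. -/

import Mathlib

open Finset

/-- Nondecreasing rearrangement of a finite vector. -/
def sortAsc {n : ℕ} {α : Type*} [LinearOrder α] (x : Fin n → α) : Fin n → α :=
  x ∘ Tuple.sort x

/-- Nonincreasing rearrangement of a finite vector. -/
def sortDesc {n : ℕ} {α : Type*} [LinearOrder α] (x : Fin n → α) : Fin n → α :=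
  fun i => sortAsc x i.rev

/-- Sum of the entries of `f` at positions `< k`. -/
def psum {n : ℕ} {α : Type*} [AddCommMonoid α] (f : Fin n → α) (k : ℕ) : α :=
  ∑ i : Fin n, if (i : ℕ) < k then f i else 0

/-- `x` is majorized by `y`: every partial sum of the `k` largest entries of `x`
is at most that of `y`, and the total sums agree. -/
def Maj {n : ℕ} {α : Type*} [AddCommMonoid α] [LinearOrder α] [IsOrderedAddMonoid α] (x y : Fin n → α) : Prop :=
  (∀ k : ℕ, psum (sortDesc x) k ≤ psum (sortDesc y) k) ∧ (∑ i, x i) = ∑ i, y i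

/-- Weak submajorization: the sum of the `k` largest entries of `x` is at most
that of `y`, for every `k`. -/
def WeakSub {n : ℕ} {α : Type*} [AddCommMonoid α] [LinearOrder α] [IsOrderedAddMonoid α] (x y : Fin n → α) : Prop :=
  ∀ k : ℕ, psum (sortDesc x) k ≤ psum (sortDesc y) k

/-- Weak supermajorization: the sum of the `k` smallest entries of `x` is at least
that of `y`, for every `k`. -/
def WeakSuper {n : ℕ} {α : Type*} [AddCommMonoid α] [LinearOrder α] [IsOrderedAddMonoid α] (x y : Fin n → α) : Prop :=
  ∀ k : ℕ, psum (sortAsc y) k ≤ psum (sortAsc x) k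

/-- Partition conjugate of `r ∈ ℕ^m`, taken with dimension `n`:
its `j`-th entry (1-indexed `j+1`) counts the indices `i` with `r i ≥ j+1`. -/
def conj {m : ℕ} (r : Fin m → ℕ) (n : ℕ) : Fin n → ℕ :=
  fun j => (Finset.univ.filter fun i => (j : ℕ) + 1 ≤ r i).card

namespace SA
variable {n : ℕ}

def dperm (x : Fin n → ℕ) : Equiv.Perm (Fin n) := Fin.revPerm.trans (Tuple.sort x)

lemma sortDesc_apply (x : Fin n → ℕ) (i : Fin n) : sortDesc x i = x (dperm x i) := rfl

lemma sortDesc_antitone (x : Fin n → ℕ) : Antitone (sortDesc x) := by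
  intro i j hij
  exact Tuple.monotone_sort x (Fin.rev_le_rev.mpr hij)

lemma psum_mono (f : Fin n → ℕ) : Monotone (psum f) := by
  intro k l hkl
  refine Finset.sum_le_sum fun i _ => ?_
  split_ifs with h1 h2 <;> omega

lemma psum_of_le (f : Fin n → ℕ) {k : ℕ} (h : n ≤ k) : psum f k = ∑ i, f i := by
  refine Finset.sum_congr rfl fun i _ => ?_
  rw [if_pos (lt_of_lt_of_le i.isLt h)]

lemma psum_succ (f : Fin n → ℕ) (k : ℕ) (h : k < n) :
    psum f (k + 1) = psum f k + f ⟨k, h⟩ := by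
  have : ∀ i : Fin n, (if (i : ℕ) < k + 1 then f i else 0)
      = (if (i : ℕ) < k then f i else 0) + (if i = ⟨k, h⟩ then f i else 0) := by
    intro i
    by_cases h2 : i = ⟨k, h⟩
    · subst h2; simp
    · have h3 : (i : ℕ) ≠ k := fun he => h2 (Fin.ext he)
      rw [if_neg h2, add_zero]
      by_cases h4 : (i : ℕ) < k
      · rw [if_pos (by omega), if_pos h4]
      · rw [if_neg (by omega), if_neg h4]
  rw [psum, Finset.sum_congr rfl fun i _ => this i, Finset.sum_add_distrib]
  congr 1
  rw [Finset.sum_ite_eq' Finset.univ (⟨k, h⟩ : Fin n) f, if_pos (Finset.mem_univ _)]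

lemma psum_filter (f : Fin n → ℕ) (k : ℕ) :
    psum f k = ∑ i ∈ Finset.univ.filter (fun i : Fin n => (i : ℕ) < k), f i := by
  rw [psum, Finset.sum_filter]

lemma card_filter_lt (k : ℕ) :
    (Finset.univ.filter (fun i : Fin n => (i : ℕ) < k)).card = min k n := by
  have himg : (Finset.univ.filter (fun i : Fin n => (i : ℕ) < k)).image Fin.val
      = Finset.range (min k n) := by
    ext j
    simp only [Finset.mem_image, Finset.mem_filter, Finset.mem_univ, true_and,
      Finset.mem_range, lt_min_iff]
    constructor
    · rintro ⟨i, hi, rfl⟩; exact ⟨hi, i.isLt⟩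
    · rintro ⟨h1, h2⟩; exact ⟨⟨j, h2⟩, h1, rfl⟩
  rw [← Finset.card_image_of_injective _ Fin.val_injective, himg, Finset.card_range]


lemma le_of_strictMono {k : ℕ} (f : Fin k → ℕ) (hf : StrictMono f) (i : Fin k) :
    (i : ℕ) ≤ f i := by
  obtain ⟨i, hi⟩ := i
  induction i with
  | zero => exact Nat.zero_le _
  | succ j ih =>
    have hj : j < k := by omega
    have h1 : (⟨j, hj⟩ : Fin k) < ⟨j + 1, hi⟩ := by simp [Fin.lt_def]
    have h2 := hf h1
    have h3 := ih hj
    simp only [Fin.val_mk] at h3 ⊢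
    omega

lemma psum_eq_castLE (f : Fin n → ℕ) {k : ℕ} (h : k ≤ n) :
    psum f k = ∑ j : Fin k, f (Fin.castLE h j) := by
  rw [psum_filter]
  refine (Finset.sum_bij' (fun (i : Fin n) _ => (⟨(i : ℕ), by
      simp_all [Finset.mem_filter]⟩ : Fin k))
    (fun (j : Fin k) _ => Fin.castLE h j) ?_ ?_ ?_ ?_ ?_)
  · intro a ha; exact Finset.mem_univ _
  · intro a ha
    simp only [Finset.mem_filter, Finset.mem_univ, true_and]
    exact a.isLt
  · intro a ha; apply Fin.ext; rfl
  · intro a ha; apply Fin.ext; rfl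
  · intro a ha; rfl

lemma sum_le_psum_of_antitone (d : Fin n → ℕ) (hd : Antitone d) (T : Finset (Fin n)) :
    ∑ i ∈ T, d i ≤ psum d T.card := by
  classical
  have hk : T.card ≤ n := by
    simpa using Finset.card_le_univ T
  set e := T.orderIsoOfFin rfl with he
  have h1 : ∑ i ∈ T, d i = ∑ j : Fin T.card, d (e j) := by
    rw [← Finset.sum_coe_sort T d]
    exact (Equiv.sum_comp e.toEquiv (fun i : T => d (i : Fin n))).symm
  have hsm : StrictMono (fun j : Fin T.card => (((e j) : Fin n) : ℕ)) := by
    intro a b hab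
    have : e a < e b := e.strictMono hab
    exact this
  rw [h1, psum_eq_castLE d hk]
  refine Finset.sum_le_sum fun j _ => ?_
  refine hd ?_
  have := le_of_strictMono _ hsm j
  simpa [Fin.le_def] using this

lemma topSum_exists (x : Fin n → ℕ) (k : ℕ) :
    ∃ S : Finset (Fin n), S.card = min k n ∧ psum (sortDesc x) k = ∑ i ∈ S, x i := by
  classical
  refine ⟨(Finset.univ.filter (fun i : Fin n => (i : ℕ) < k)).image (dperm x), ?_, ?_⟩
  · rw [Finset.card_image_of_injective _ (Equiv.injective _), card_filter_lt]
  · rw [psum_filter, Finset.sum_image (fun a _ b _ hab => (dperm x).injective hab)]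
    rfl

lemma sum_le_topSum (x : Fin n → ℕ) (S : Finset (Fin n)) :
    ∑ i ∈ S, x i ≤ psum (sortDesc x) S.card := by
  classical
  have h1 : ∑ i ∈ S, x i = ∑ i ∈ S.image (dperm x).symm, sortDesc x i := by
    rw [Finset.sum_image (fun a _ b _ hab => (dperm x).symm.injective hab)]
    refine Finset.sum_congr rfl fun i _ => ?_
    rw [sortDesc_apply]
    simp
  rw [h1]
  have h2 := sum_le_psum_of_antitone (sortDesc x) (sortDesc_antitone x) (S.image (dperm x).symm)
  rwa [Finset.card_image_of_injective _ (Equiv.injective _)] at h2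

lemma sum_sortDesc (x : Fin n → ℕ) : ∑ i, sortDesc x i = ∑ i, x i := by
  simp only [sortDesc_apply]
  exact Equiv.sum_comp (dperm x) x


def gfun (c : Fin n → ℕ) (k : ℕ) : ℕ := psum (sortDesc c) k

def IsBase (c x : Fin n → ℕ) : Prop :=
  (∀ S : Finset (Fin n), ∑ i ∈ S, x i ≤ gfun c S.card) ∧ (∑ i, x i) = gfun c n

lemma gfun_n (c : Fin n → ℕ) : gfun c n = ∑ i, c i := by
  rw [gfun, psum_of_le _ le_rfl, sum_sortDesc]

lemma maj_iff_base (c x : Fin n → ℕ) : Maj x c ↔ IsBase c x := by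
  constructor
  · intro h
    refine ⟨fun S => le_trans (sum_le_topSum x S) (h.1 S.card), ?_⟩
    rw [gfun_n]; exact h.2
  · intro h
    constructor
    · intro k
      obtain ⟨S, hcard, hEq⟩ := topSum_exists x k
      rw [hEq]
      calc ∑ i ∈ S, x i ≤ gfun c S.card := h.1 S
        _ ≤ gfun c k := by rw [hcard]; exact psum_mono _ (min_le_left _ _)
    · rw [h.2, gfun_n]

def Efun (c : Fin n → ℕ) (j : ℕ) : ℕ := if h : j < n then sortDesc c ⟨j, h⟩ else 0

lemma gfun_succ (c : Fin n → ℕ) (k : ℕ) : gfun c (k + 1) = gfun c k + Efun c k := by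
  by_cases h : k < n
  · rw [gfun, gfun, psum_succ _ k h, Efun, dif_pos h]
  · rw [gfun, gfun, psum_of_le _ (by omega), psum_of_le _ (by omega), Efun, dif_neg h, add_zero]

lemma Efun_antitone (c : Fin n → ℕ) {j j' : ℕ} (h : j ≤ j') : Efun c j' ≤ Efun c j := by
  unfold Efun
  split_ifs with h1 h2
  · exact sortDesc_antitone c (by simp [Fin.le_def]; omega)
  · omega
  · exact Nat.zero_le _
  · exact Nat.zero_le _

lemma gfun_add_Ico (c : Fin n → ℕ) {a b : ℕ} (h : a ≤ b) :
    gfun c b = gfun c a + ∑ j ∈ Finset.Ico a b, Efun c j := by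
  induction b with
  | zero =>
    have : a = 0 := by omega
    subst this; simp
  | succ b ih =>
    rcases Nat.lt_or_ge a (b + 1) with h1 | h1
    · have h2 : a ≤ b := by omega
      rw [gfun_succ, ih h2, Finset.sum_Ico_succ_top h2]
      ring
    · have : a = b + 1 := by omega
      subst this; simp

lemma gfun_concave (c : Fin n → ℕ) {a b a' b' : ℕ} (h1 : a' ≤ a) (h2 : a' ≤ b)
    (h3 : a ≤ b') (hsum : a' + b' = a + b) :
    gfun c b' + gfun c a' ≤ gfun c a + gfun c b := by
  rw [gfun_add_Ico c h3, gfun_add_Ico c h2]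
  have hlen : b' - a = b - a' := by omega
  rw [Finset.sum_Ico_eq_sum_range, Finset.sum_Ico_eq_sum_range, hlen]
  have : ∑ j ∈ Finset.range (b - a'), Efun c (a + j)
      ≤ ∑ j ∈ Finset.range (b - a'), Efun c (a' + j) :=
    Finset.sum_le_sum fun j _ => Efun_antitone c (by omega)
  omega


def Tight (c x : Fin n → ℕ) (S : Finset (Fin n)) : Prop := ∑ i ∈ S, x i = gfun c S.card

lemma tight_univ (c x : Fin n → ℕ) (hx : IsBase c x) : Tight c x Finset.univ := by
  rw [Tight, Finset.card_univ, Fintype.card_fin]; exact hx.2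

lemma tight_empty (c x : Fin n → ℕ) : Tight c x ∅ := by
  simp [Tight, gfun, psum]

lemma tight_inter_union (c x : Fin n → ℕ) (hx : IsBase c x) {A B : Finset (Fin n)}
    (hA : Tight c x A) (hB : Tight c x B) : Tight c x (A ∩ B) ∧ Tight c x (A ∪ B) := by
  classical
  have hsum : ∑ i ∈ A ∪ B, x i + ∑ i ∈ A ∩ B, x i = ∑ i ∈ A, x i + ∑ i ∈ B, x i :=
    Finset.sum_union_inter
  have hcard : (A ∪ B).card + (A ∩ B).card = A.card + B.card :=
    Finset.card_union_add_card_inter A B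
  have hconc : gfun c (A ∪ B).card + gfun c (A ∩ B).card ≤ gfun c A.card + gfun c B.card := by
    refine gfun_concave c ?_ ?_ ?_ ?_
    · exact Finset.card_le_card Finset.inter_subset_left
    · exact Finset.card_le_card Finset.inter_subset_right
    · exact Finset.card_le_card Finset.subset_union_left
    · omega
  have h1 := hx.1 (A ∪ B)
  have h2 := hx.1 (A ∩ B)
  rw [Tight] at hA hB ⊢
  constructor
  · omega
  · rw [Tight]; omega

lemma tight_inf (c x : Fin n → ℕ) (hx : IsBase c x) (s : Finset (Fin n))
    (T : Fin n → Finset (Fin n)) (hT : ∀ q ∈ s, Tight c x (T q)) :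
    Tight c x (s.inf T) := by
  classical
  induction s using Finset.induction_on with
  | empty => rw [Finset.inf_empty, Finset.top_eq_univ]; exact tight_univ c x hx
  | insert _ _ hnm ih =>
    rename_i a s'
    rw [Finset.inf_insert]
    exact (tight_inter_union c x hx (hT a (Finset.mem_insert_self a s'))
      (ih fun q hq => hT q (Finset.mem_insert_of_mem hq))).1

lemma tight_sup (c x : Fin n → ℕ) (hx : IsBase c x) (s : Finset (Fin n))
    (T : Fin n → Finset (Fin n)) (hT : ∀ q ∈ s, Tight c x (T q)) :
    Tight c x (s.sup T) := by
  classical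
  induction s using Finset.induction_on with
  | empty => rw [Finset.sup_empty, Finset.bot_eq_empty]; exact tight_empty c x
  | insert _ _ hnm ih =>
    rename_i a s'
    rw [Finset.sup_insert]
    exact (tight_inter_union c x hx (hT a (Finset.mem_insert_self a s'))
      (ih fun q hq => hT q (Finset.mem_insert_of_mem hq))).2

lemma mem_inf_of (s : Finset (Fin n)) (T : Fin n → Finset (Fin n)) (a : Fin n)
    (h : ∀ q ∈ s, a ∈ T q) : a ∈ s.inf T := by
  classical
  induction s using Finset.induction_on with
  | empty => rw [Finset.inf_empty, Finset.top_eq_univ]; exact Finset.mem_univ a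
  | insert _ _ hnm ih =>
    rename_i b s'
    rw [Finset.inf_insert, Finset.inf_eq_inter, Finset.mem_inter]
    exact ⟨h b (Finset.mem_insert_self b s'),
      ih fun q hq => h q (Finset.mem_insert_of_mem hq)⟩

lemma not_mem_sup (s : Finset (Fin n)) (T : Fin n → Finset (Fin n)) (a : Fin n)
    (h : ∀ q ∈ s, a ∉ T q) : a ∉ s.sup T := by
  classical
  induction s using Finset.induction_on with
  | empty => rw [Finset.sup_empty, Finset.bot_eq_empty]; exact Finset.notMem_empty a
  | insert _ _ hnm ih =>
    rename_i b s'
    rw [Finset.sup_insert, Finset.sup_eq_union, Finset.mem_union]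
    push_neg
    exact ⟨h b (Finset.mem_insert_self b s'),
      ih fun q hq => h q (Finset.mem_insert_of_mem hq)⟩


def mv (y : Fin n → ℕ) (p q : Fin n) : Fin n → ℕ :=
  fun i => y i + (if i = q then 1 else 0) - (if i = p then 1 else 0)

lemma mv_apply_src (y : Fin n → ℕ) (p q : Fin n) (hpq : p ≠ q) : mv y p q p = y p - 1 := by
  simp [mv, hpq]

lemma mv_apply_tgt (y : Fin n → ℕ) (p q : Fin n) (hpq : p ≠ q) : mv y p q q = y q + 1 := by
  simp [mv, Ne.symm hpq]

lemma mv_apply_other (y : Fin n → ℕ) (p q i : Fin n) (h1 : i ≠ p) (h2 : i ≠ q) :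
    mv y p q i = y i := by
  simp [mv, h1, h2]

lemma mv_point (y : Fin n → ℕ) (p q : Fin n) (hp : 1 ≤ y p) (i : Fin n) :
    mv y p q i + (if i = p then 1 else 0) = y i + (if i = q then 1 else 0) := by
  unfold mv
  split_ifs with h1 h2 h2 <;> simp_all <;> omega

lemma sum_mv (y : Fin n → ℕ) (p q : Fin n) (hp : 1 ≤ y p) (S : Finset (Fin n)) :
    ∑ i ∈ S, mv y p q i + (if p ∈ S then 1 else 0)
      = ∑ i ∈ S, y i + (if q ∈ S then 1 else 0) := by
  classical
  have h1 : ∑ i ∈ S, (mv y p q i + (if i = p then 1 else 0))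
      = ∑ i ∈ S, (y i + (if i = q then 1 else 0)) :=
    Finset.sum_congr rfl fun i _ => mv_point y p q hp i
  rw [Finset.sum_add_distrib, Finset.sum_add_distrib] at h1
  rwa [Finset.sum_ite_eq' S p (fun _ => 1), Finset.sum_ite_eq' S q (fun _ => 1)] at h1

lemma sum_mv_univ (y : Fin n → ℕ) (p q : Fin n) (hp : 1 ≤ y p) :
    ∑ i, mv y p q i = ∑ i, y i := by
  have := sum_mv y p q hp Finset.univ
  simp only [Finset.mem_univ, if_pos] at this
  omega

lemma not_base_mv (c y : Fin n → ℕ) {p q : Fin n} (hy : IsBase c y) (hp : 1 ≤ y p)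
    (h : ¬ IsBase c (mv y p q)) :
    ∃ S : Finset (Fin n), Tight c y S ∧ q ∈ S ∧ p ∉ S := by
  classical
  rw [IsBase, not_and_or] at h
  rcases h with h | h
  · push_neg at h
    obtain ⟨S, hS⟩ := h
    have hs := sum_mv y p q hp S
    have hfeas := hy.1 S
    by_cases hqS : q ∈ S
    · by_cases hpS : p ∈ S
      · simp only [if_pos hqS, if_pos hpS] at hs; omega
      · refine ⟨S, ?_, hqS, hpS⟩
        rw [Tight]
        simp only [if_pos hqS, if_neg hpS] at hs
        omega
    · simp only [if_neg hqS] at hs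
      split_ifs at hs <;> omega
  · exact absurd (by rw [sum_mv_univ y p q hp]; exact hy.2) h

lemma exchange (c x y : Fin n → ℕ) (hx : IsBase c x) (hy : IsBase c y) {p : Fin n}
    (hp : x p < y p) :
    ∃ q, y q < x q ∧ IsBase c (mv y p q) ∧ IsBase c (mv x q p) := by
  classical
  by_contra hcon
  push_neg at hcon
  -- choice of tight sets
  have hyp1 : 1 ≤ y p := by omega
  have hchB : ∀ q : Fin n, ∃ S : Finset (Fin n),
      (y q < x q ∧ ¬ IsBase c (mv y p q)) → (Tight c y S ∧ q ∈ S ∧ p ∉ S) := by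
    intro q
    by_cases h : y q < x q ∧ ¬ IsBase c (mv y p q)
    · obtain ⟨S, hS⟩ := not_base_mv c y hy hyp1 h.2
      exact ⟨S, fun _ => hS⟩
    · exact ⟨∅, fun hh => absurd hh h⟩
  have hchA : ∀ q : Fin n, ∃ S : Finset (Fin n),
      (y q < x q ∧ IsBase c (mv y p q)) → (Tight c x S ∧ p ∈ S ∧ q ∉ S) := by
    intro q
    by_cases h : y q < x q ∧ IsBase c (mv y p q)
    · have hnb : ¬ IsBase c (mv x q p) := hcon q h.1 h.2
      have hq1 : 1 ≤ x q := by omega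
      obtain ⟨S, hS⟩ := not_base_mv c x hx hq1 hnb
      exact ⟨S, fun _ => hS⟩
    · exact ⟨∅, fun hh => absurd hh h⟩
  choose TB hTB using hchB
  choose TA hTA using hchA
  set QB : Finset (Fin n) :=
    Finset.univ.filter (fun q => y q < x q ∧ ¬ IsBase c (mv y p q)) with hQB
  set QA : Finset (Fin n) :=
    Finset.univ.filter (fun q => y q < x q ∧ IsBase c (mv y p q)) with hQA
  set U : Finset (Fin n) := QB.sup TB with hU
  set W : Finset (Fin n) := QA.inf TA with hW
  have hUt : Tight c y U :=
    tight_sup c y hy QB TB (fun q hq => (hTB q (by simpa [hQB] using hq)).1)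
  have hWt : Tight c x W :=
    tight_inf c x hx QA TA (fun q hq => (hTA q (by simpa [hQA] using hq)).1)
  have hpU : p ∉ U :=
    not_mem_sup QB TB p (fun q hq => (hTB q (by simpa [hQB] using hq)).2.2)
  have hpW : p ∈ W :=
    mem_inf_of QA TA p (fun q hq => (hTA q (by simpa [hQA] using hq)).2.1)
  have hQ : ∀ q : Fin n, y q < x q → q ∈ U ∨ q ∉ W := by
    intro q hq
    by_cases hb : IsBase c (mv y p q)
    · right
      intro hqW
      have hsub : W ⊆ TA q := Finset.inf_le (by simp [hQA, hq, hb])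
      exact (hTA q ⟨hq, hb⟩).2.2 (hsub hqW)
    · left
      have hsub : TB q ⊆ U := Finset.le_sup (by simp [hQB, hq, hb])
      exact hsub (hTB q ⟨hq, hb⟩).2.1
  -- arithmetic contradiction
  set D : Finset (Fin n) := W \ U with hD
  have hpD : p ∈ D := Finset.mem_sdiff.mpr ⟨hpW, hpU⟩
  have hf6 : ∑ i ∈ D, x i < ∑ i ∈ D, y i := by
    refine Finset.sum_lt_sum (fun i hi => ?_) ⟨p, hpD, hp⟩
    rcases Finset.mem_sdiff.mp hi with ⟨hiW, hiU⟩
    by_contra hcon2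
    push_neg at hcon2
    rcases hQ i hcon2 with h | h
    · exact hiU h
    · exact h hiW
  have hsplitW : ∑ i ∈ D, x i + ∑ i ∈ W ∩ U, x i = ∑ i ∈ W, x i := by
    rw [hD, ← Finset.sum_union (Finset.sdiff_disjoint.mono_right Finset.inter_subset_right)]
    congr 1
    rw [Finset.sdiff_union_inter]
  have hsplitU : ∑ i ∈ U, y i + ∑ i ∈ D, y i = ∑ i ∈ W ∪ U, y i := by
    rw [hD, ← Finset.sum_union Finset.disjoint_sdiff]
    congr 1
    rw [Finset.union_sdiff_self_eq_union, Finset.union_comm]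
  have hfeas1 : ∑ i ∈ W ∩ U, x i ≤ gfun c (W ∩ U).card := hx.1 _
  have hfeas2 : ∑ i ∈ W ∪ U, y i ≤ gfun c (W ∪ U).card := hy.1 _
  have hcard : (W ∪ U).card + (W ∩ U).card = W.card + U.card :=
    Finset.card_union_add_card_inter W U
  have hconc : gfun c (W ∪ U).card + gfun c (W ∩ U).card
      ≤ gfun c W.card + gfun c U.card := by
    refine gfun_concave c ?_ ?_ ?_ ?_
    · exact Finset.card_le_card Finset.inter_subset_left
    · exact Finset.card_le_card Finset.inter_subset_right
    · exact Finset.card_le_card Finset.subset_union_left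
    · omega
  rw [Tight] at hUt hWt
  omega


lemma maj_refl (w : Fin n → ℕ) : Maj w w := ⟨fun _ => le_rfl, rfl⟩

lemma maj_trans {a b c : Fin n → ℕ} (h1 : Maj a b) (h2 : Maj b c) : Maj a c :=
  ⟨fun k => le_trans (h1.1 k) (h2.1 k), h1.2.trans h2.2⟩

lemma maj_mv (w : Fin n → ℕ) {p q : Fin n} (hpq : p ≠ q) (h : w q + 1 ≤ w p) :
    Maj (mv w p q) w := by
  classical
  have hwp : 1 ≤ w p := by omega
  constructor
  · intro k
    obtain ⟨S, hcard, hEq⟩ := topSum_exists (mv w p q) k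
    rw [hEq]
    have hs := sum_mv w p q hwp S
    by_cases hqS : q ∈ S
    · by_cases hpS : p ∈ S
      · simp only [if_pos hqS, if_pos hpS] at hs
        have h1 : ∑ i ∈ S, mv w p q i = ∑ i ∈ S, w i := by omega
        rw [h1]
        calc ∑ i ∈ S, w i ≤ psum (sortDesc w) S.card := sum_le_topSum w S
          _ ≤ psum (sortDesc w) k := by rw [hcard]; exact psum_mono _ (min_le_left _ _)
      · -- the interesting case
        simp only [if_pos hqS, if_neg hpS] at hs
        set S' : Finset (Fin n) := insert p (S.erase q) with hS'
        have hpe : p ∉ S.erase q := fun hmem => hpS (Finset.mem_of_mem_erase hmem)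
        have hcard' : S'.card = S.card := by
          rw [hS', Finset.card_insert_of_notMem hpe, Finset.card_erase_of_mem hqS]
          have : 1 ≤ S.card := Finset.card_pos.mpr ⟨q, hqS⟩
          omega
        have hsum' : ∑ i ∈ S', w i = w p + ∑ i ∈ S.erase q, w i := by
          rw [hS', Finset.sum_insert hpe]
        have hsum'' : ∑ i ∈ S, w i = w q + ∑ i ∈ S.erase q, w i :=
          (Finset.add_sum_erase S w hqS).symm
        have h1 : ∑ i ∈ S, mv w p q i ≤ ∑ i ∈ S', w i := by omega
        calc ∑ i ∈ S, mv w p q i ≤ ∑ i ∈ S', w i := h1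
          _ ≤ psum (sortDesc w) S'.card := sum_le_topSum w S'
          _ ≤ psum (sortDesc w) k := by
              rw [hcard', hcard]; exact psum_mono _ (min_le_left _ _)
    · simp only [if_neg hqS] at hs
      have h1 : ∑ i ∈ S, mv w p q i ≤ ∑ i ∈ S, w i := by split_ifs at hs <;> omega
      calc ∑ i ∈ S, mv w p q i ≤ ∑ i ∈ S, w i := h1
        _ ≤ psum (sortDesc w) S.card := sum_le_topSum w S
        _ ≤ psum (sortDesc w) k := by rw [hcard]; exact psum_mono _ (min_le_left _ _)
  · exact sum_mv_univ w p q hwp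

lemma sortDesc_eq_of_maj {u v : Fin n → ℕ} (h1 : Maj u v) (h2 : Maj v u) :
    sortDesc u = sortDesc v := by
  funext i
  have e1 := psum_succ (sortDesc u) i.val i.isLt
  have e2 := psum_succ (sortDesc v) i.val i.isLt
  have e3 := le_antisymm (h1.1 i.val) (h2.1 i.val)
  have e4 := le_antisymm (h1.1 (i.val + 1)) (h2.1 (i.val + 1))
  have hi : (⟨i.val, i.isLt⟩ : Fin n) = i := Fin.eta i i.isLt
  rw [hi] at e1 e2
  omega

lemma min_of_locopt (c b x : Fin n → ℕ) (hx : IsBase c x)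
    (hloc : ∀ s t : Fin n, 1 ≤ x s → IsBase c (mv x s t) → b s + x s ≤ b t + x t + 1) :
    ∀ y : Fin n → ℕ, IsBase c y → Maj (fun i => b i + x i) (fun i => b i + y i) := by
  classical
  suffices hN : ∀ N : ℕ, ∀ y : Fin n → ℕ, IsBase c y →
      (∑ i, ((x i - y i) + (y i - x i))) ≤ N →
      Maj (fun i => b i + x i) (fun i => b i + y i) by
    intro y hy
    exact hN _ y hy le_rfl
  intro N
  induction N with
  | zero =>
    intro y hy hD
    have hxy : x = y := by
      funext i
      have h0 : (x i - y i) + (y i - x i) = 0 := by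
        have := Finset.sum_eq_zero_iff.mp (Nat.le_zero.mp hD) i (Finset.mem_univ i)
        omega
      omega
    rw [hxy]
    exact maj_refl _
  | succ N ih =>
    intro y hy hD
    by_cases hxy : x = y
    · rw [hxy]; exact maj_refl _
    · -- find p with x p < y p
      have hsums : ∑ i, x i = ∑ i, y i := by rw [hx.2, hy.2]
      have hp : ∃ p, x p < y p := by
        by_contra hcon
        push_neg at hcon
        have : ∀ i ∈ Finset.univ, y i = x i :=
          (Finset.sum_eq_sum_iff_of_le fun i _ => hcon i).mp hsums.symm
        exact hxy (funext fun i => (this i (Finset.mem_univ i)).symm)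
      obtain ⟨p, hp⟩ := hp
      obtain ⟨q, hq, hby', hbx'⟩ := exchange c x y hx hy hp
      have hpq : p ≠ q := by rintro rfl; omega
      have hyp1 : 1 ≤ y p := by omega
      have hxq1 : 1 ≤ x q := by omega
      have hlocpq := hloc q p hxq1 hbx'
      have hw : b q + y q + 1 ≤ b p + y p := by omega
      have hmv : Maj (mv (fun i => b i + y i) p q) (fun i => b i + y i) :=
        maj_mv (fun i => b i + y i) hpq hw
      have hcomm : mv (fun i => b i + y i) p q = fun i => b i + mv y p q i := by
        funext i
        by_cases h1 : i = p
        · subst h1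
          rw [mv_apply_src _ _ _ hpq, mv_apply_src _ _ _ hpq]
          omega
        · by_cases h2 : i = q
          · subst h2
            rw [mv_apply_tgt _ _ _ hpq, mv_apply_tgt _ _ _ hpq]
            omega
          · rw [mv_apply_other _ _ _ _ h1 h2, mv_apply_other _ _ _ _ h1 h2]
      -- distance decrease
      have hdec : ∑ i, ((x i - mv y p q i) + (mv y p q i - x i))
          < ∑ i, ((x i - y i) + (y i - x i)) := by
        refine Finset.sum_lt_sum (fun i _ => ?_) ⟨p, Finset.mem_univ p, ?_⟩
        · by_cases h1 : i = p
          · subst h1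
            rw [mv_apply_src _ _ _ hpq]
            omega
          · by_cases h2 : i = q
            · subst h2
              rw [mv_apply_tgt _ _ _ hpq]
              omega
            · rw [mv_apply_other _ _ _ _ h1 h2]
        · rw [mv_apply_src _ _ _ hpq]
          omega
      have hIH := ih (mv y p q) hby' (by omega)
      rw [← hcomm] at hIH
      exact maj_trans hIH hmv


lemma mv_add_comm (b y : Fin n → ℕ) {p q : Fin n} (hpq : p ≠ q) (hp : 1 ≤ y p) :
    mv (fun i => b i + y i) p q = fun i => b i + mv y p q i := by
  funext i
  by_cases h1 : i = p
  · subst h1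
    rw [mv_apply_src _ _ _ hpq, mv_apply_src _ _ _ hpq]
    omega
  · by_cases h2 : i = q
    · subst h2
      rw [mv_apply_tgt _ _ _ hpq, mv_apply_tgt _ _ _ hpq]
      omega
    · rw [mv_apply_other _ _ _ _ h1 h2, mv_apply_other _ _ _ _ h1 h2]

lemma sq_move_lt {a b : ℕ} (h : b + 2 ≤ a) : (a - 1) ^ 2 + (b + 1) ^ 2 < a ^ 2 + b ^ 2 := by
  obtain ⟨d, rfl⟩ : ∃ d, a = b + 2 + d := ⟨a - (b + 2), by omega⟩
  have h1 : b + 2 + d - 1 = b + 1 + d := by omega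
  rw [h1]
  nlinarith [sq_nonneg d]

lemma phi_lt (Z : Fin n → ℕ) {s t : Fin n} (hst : s ≠ t) (h : Z t + 2 ≤ Z s) :
    ∑ i, (mv Z s t i) ^ 2 < ∑ i, (Z i) ^ 2 := by
  classical
  have ht : t ∈ Finset.univ.erase s := Finset.mem_erase.mpr ⟨Ne.symm hst, Finset.mem_univ t⟩
  rw [← Finset.add_sum_erase _ (fun i => (mv Z s t i) ^ 2) (Finset.mem_univ s),
      ← Finset.add_sum_erase _ (fun i => (mv Z s t i) ^ 2) ht,
      ← Finset.add_sum_erase _ (fun i => (Z i) ^ 2) (Finset.mem_univ s),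
      ← Finset.add_sum_erase _ (fun i => (Z i) ^ 2) ht]
  have hrest : ∑ i ∈ (Finset.univ.erase s).erase t, (mv Z s t i) ^ 2
      = ∑ i ∈ (Finset.univ.erase s).erase t, (Z i) ^ 2 := by
    refine Finset.sum_congr rfl fun i hi => ?_
    rcases Finset.mem_erase.mp hi with ⟨hit, hi2⟩
    rcases Finset.mem_erase.mp hi2 with ⟨his, _⟩
    rw [mv_apply_other _ _ _ _ his hit]
  rw [hrest, mv_apply_src _ _ _ hst, mv_apply_tgt _ _ _ hst]
  have := sq_move_lt h
  omega

end SA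

theorem stmt_18 {m n : ℕ} (b : Fin n → ℕ) (hb : Antitone b)
    (r : Fin m → ℕ) (hr : ∀ i, r i ≤ n) (u v : Fin n → ℕ)
    (V : Set (Fin n → ℕ))
    (hV : V = {w | ∃ x : Fin n → ℕ, Maj x (conj r n) ∧ w = fun i => b i + x i})
    (hu : u ∈ V) (hv : v ∈ V)
    (humin : ∀ w ∈ V, Maj w u → Maj u w)
    (hvmin : ∀ w ∈ V, Maj w v → Maj v w) :
    (∀ w ∈ V, Maj u w ∧ Maj v w) ∧ sortDesc u = sortDesc v := by
  classical
  set c : Fin n → ℕ := conj r n with hc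
  rw [hV] at hu hv
  obtain ⟨xu, hxu, hueq⟩ := hu
  obtain ⟨xv, hxv, hveq⟩ := hv
  have hxu' : SA.IsBase c xu := (SA.maj_iff_base c xu).mp hxu
  have hxv' : SA.IsBase c xv := (SA.maj_iff_base c xv).mp hxv
  set s : Set ℕ := {t | ∃ x : Fin n → ℕ, SA.IsBase c x ∧ ∑ i, (b i + x i) ^ 2 = t}
    with hs
  have hsne : s.Nonempty := ⟨_, xu, hxu', rfl⟩
  obtain ⟨x0, hx0, hΦ0⟩ := Nat.sInf_mem hsne
  have hminΦ : ∀ x' : Fin n → ℕ, SA.IsBase c x' →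
      ∑ i, (b i + x0 i) ^ 2 ≤ ∑ i, (b i + x' i) ^ 2 := by
    intro x' h
    rw [hΦ0]
    exact Nat.sInf_le ⟨x', h, rfl⟩
  have hloc : ∀ p q : Fin n, 1 ≤ x0 p → SA.IsBase c (SA.mv x0 p q) →
      b p + x0 p ≤ b q + x0 q + 1 := by
    intro p q hp1 hbase
    by_contra hcon
    push_neg at hcon
    have hpq : p ≠ q := by rintro rfl; omega
    have hZ : (fun i => b i + x0 i) q + 2 ≤ (fun i => b i + x0 i) p := by
      simpa using (by omega : b q + x0 q + 2 ≤ b p + x0 p)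
    have hlt := SA.phi_lt (fun i => b i + x0 i) hpq hZ
    rw [SA.mv_add_comm b x0 hpq hp1] at hlt
    have hlt' : ∑ i, (b i + SA.mv x0 p q i) ^ 2 < ∑ i, (b i + x0 i) ^ 2 := hlt
    exact absurd (hminΦ _ hbase) (by omega)
  have hmin := SA.min_of_locopt c b x0 hx0 hloc
  have hzV : (fun i => b i + x0 i) ∈ V := by
    rw [hV]
    exact ⟨x0, (SA.maj_iff_base c x0).mpr hx0, rfl⟩
  have hzw : ∀ w ∈ V, Maj (fun i => b i + x0 i) w := by
    intro w hw
    rw [hV] at hw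
    obtain ⟨xw, hxw, rfl⟩ := hw
    exact hmin xw ((SA.maj_iff_base c xw).mp hxw)
  have huV : u ∈ V := by rw [hV]; exact ⟨xu, hxu, hueq⟩
  have hvV : v ∈ V := by rw [hV]; exact ⟨xv, hxv, hveq⟩
  have huz : Maj u (fun i => b i + x0 i) := humin _ hzV (hzw u huV)
  have hvz : Maj v (fun i => b i + x0 i) := hvmin _ hzV (hzw v hvV)
  have hufull : ∀ w ∈ V, Maj u w := fun w hw => SA.maj_trans huz (hzw w hw)
  have hvfull : ∀ w ∈ V, Maj v w := fun w hw => SA.maj_trans hvz (hzw w hw)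
  exact ⟨fun w hw => ⟨hufull w hw, hvfull w hw⟩,
    SA.sortDesc_eq_of_maj (hufull v hvV) (hvfull u huV)⟩
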